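/- In the 1D guided masked discrete diffusion, let Z = Σ_{x=1}^{N-1} p(x)^{-w} p(x|z)^{1+w} and let q_t^{z,w} solve dq_t/dt = Z·(e^{-(T-t)}/(1-e^{-(T-t)})) Q̄[p^{z,w}] q_t with q_0 = δ_N, where Q̄[p^{z,w}](x,N) = p^{z,w}(x) for x < N, Q̄[p^{z,w}](N,N) = -1, zeros elsewhere, and p^{z,w}(x) = p(x)^{-w}p(x|z)^{1+w}/Z. Then q_t^{z,w}(x) = (1 - ((1-e^{-(T-t)})/(1-e^{-T}))^Z) p^{z,w}(x) for x < N and q_t^{z,w}(N) = ((1-e^{-(T-t)})/(1-e^{-T}))^Z. -/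

import Mathlib

open Real Finset Matrix

/-- Time-rescaled 1D reverse rate matrix `Q̄[μ]` associated with a distribution `μ`:
`Q̄[μ] x N = μ x` for unmasked `x`, `Q̄[μ] N N = -1`, zeros elsewhere. -/
noncomputable def revQbar (n : ℕ) (μ : Fin (n + 1) → ℝ) :
    Matrix (Fin (n + 1)) (Fin (n + 1)) ℝ :=
  Matrix.of fun x y =>
    if y = Fin.last n then (if x = Fin.last n then -1 else μ x) else 0

/-- explicit solution of the 1D guided reverse sampling dynamics.
With `Z = Σ_{x<N} p(x)^{-w} p(x|z)^{1+w}` and tilted distribution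
`p^{z,w}(x) = p(x)^{-w} p(x|z)^{1+w} / Z`, if `q` solves
`dq_t/dt = Z (e^{-(T-t)}/(1-e^{-(T-t)})) Q̄[p^{z,w}] q_t` with `q_0 = δ_N`, then
`q_t x = (1 - r(t)^Z) p^{z,w}(x)` for `x < N` and `q_t N = r(t)^Z`,
where `r t = (1-e^{-(T-t)})/(1-e^{-T})`. -/
theorem guided_reverse_density_1d (n : ℕ) (T : ℝ) (hT : 0 < T) (w : ℝ) (hw : -1 ≤ w)
    (p pz : Fin (n + 1) → ℝ)
    (hp0 : ∀ x, 0 ≤ p x) (hpN : p (Fin.last n) = 0) (hp1 : ∑ x, p x = 1)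
    (hpz0 : ∀ x, 0 ≤ pz x) (hpzN : pz (Fin.last n) = 0) (hpz1 : ∑ x, pz x = 1)
    (hsupp : ∀ x, 0 < pz x → 0 < p x)
    (Z : ℝ) (hZ : Z = ∑ x ∈ Finset.univ.erase (Fin.last n), p x ^ (-w) * pz x ^ (1 + w))
    (ptw : Fin (n + 1) → ℝ) (hptw : ∀ x, ptw x = p x ^ (-w) * pz x ^ (1 + w) / Z)
    (q : ℝ → Fin (n + 1) → ℝ)
    (hq0 : q 0 = fun x => if x = Fin.last n then 1 else 0)
    (hqc : ContinuousOn q (Set.Icc 0 T))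
    (hode : ∀ t ∈ Set.Ico (0 : ℝ) T, HasDerivAt q
      ((Z * (Real.exp (-(T - t)) / (1 - Real.exp (-(T - t))))) •
        (revQbar n ptw).mulVec (q t)) t) :
    ∀ t ∈ Set.Icc (0 : ℝ) T, ∀ x,
      q t x =
        if x = Fin.last n then
          ((1 - Real.exp (-(T - t))) / (1 - Real.exp (-T))) ^ Z
        else
          (1 - ((1 - Real.exp (-(T - t))) / (1 - Real.exp (-T))) ^ Z) * ptw x := by
  have hD : 0 < 1 - Real.exp (-T) := by
    have : Real.exp (-T) < 1 := Real.exp_lt_one_iff.mpr (by linarith)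
    linarith
  -- positivity of Z
  have hZpos : 0 < Z := by
    obtain ⟨x0, hx0mem, hx0⟩ : ∃ x ∈ Finset.univ.erase (Fin.last n), 0 < pz x := by
      by_contra h
      push_neg at h
      have hzero : ∀ x ∈ Finset.univ.erase (Fin.last n), pz x = 0 :=
        fun x hx => le_antisymm (h x hx) (hpz0 x)
      have hs := Finset.sum_erase_add Finset.univ pz (Finset.mem_univ (Fin.last n))
      rw [Finset.sum_eq_zero hzero, hpzN, hpz1] at hs
      norm_num at hs
    rw [hZ]
    refine Finset.sum_pos' (fun x _ => mul_nonneg (Real.rpow_nonneg (hp0 x) _)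
      (Real.rpow_nonneg (hpz0 x) _)) ⟨x0, hx0mem, ?_⟩
    exact mul_pos (Real.rpow_pos_of_pos (hsupp x0 hx0) _) (Real.rpow_pos_of_pos hx0 _)
  -- the function r
  set r : ℝ → ℝ := fun t => (1 - Real.exp (-(T - t))) / (1 - Real.exp (-T)) with hrdef
  have hrval : ∀ t, r t = (1 - Real.exp (-(T - t))) / (1 - Real.exp (-T)) := by
    intro t; rw [hrdef]
  have hrderiv : ∀ t : ℝ, HasDerivAt r (-Real.exp (-(T - t)) / (1 - Real.exp (-T))) t := by
    intro t
    have h1 : HasDerivAt (fun s : ℝ => -(T - s)) 1 t := by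
      simpa using ((hasDerivAt_id t).sub_const T)
    have h2 : HasDerivAt (fun s => Real.exp (-(T - s))) (Real.exp (-(T - t))) t := by
      simpa using h1.exp
    have h3 : HasDerivAt (fun s => 1 - Real.exp (-(T - s))) (-Real.exp (-(T - t))) t :=
      h2.const_sub 1
    rw [hrdef]
    simpa [div_eq_mul_inv] using h3.div_const (1 - Real.exp (-T))
  have hrpos : ∀ s : ℝ, s < T → 0 < r s := by
    intro s hs
    have : Real.exp (-(T - s)) < 1 := Real.exp_lt_one_iff.mpr (by linarith)
    rw [hrval]
    exact div_pos (by linarith) hD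
  have hr0 : r 0 = 1 := by
    rw [hrval]; simp [div_self hD.ne']
  -- component-wise derivative
  have hcomp : ∀ t ∈ Set.Ico (0:ℝ) T, ∀ x, HasDerivAt (fun s => q s x)
      ((Z * (Real.exp (-(T - t)) / (1 - Real.exp (-(T - t))))) *
        ((if x = Fin.last n then -1 else ptw x) * q t (Fin.last n))) t := by
    intro t ht x
    have h := (hasDerivAt_pi.mp (hode t ht)) x
    have hmv : (revQbar n ptw).mulVec (q t) x
        = (if x = Fin.last n then -1 else ptw x) * q t (Fin.last n) := by
      simp only [Matrix.mulVec, dotProduct, revQbar, Matrix.of_apply]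
      rw [Finset.sum_eq_single (Fin.last n) (fun b _ hb => by simp [hb]) (by simp)]
      simp
    simpa [hmv, mul_assoc] using h
  -- the masked coordinate on [0, T)
  have hu : ∀ t ∈ Set.Ico (0:ℝ) T, q t (Fin.last n) = r t ^ Z := by
    intro t ht
    have hrposIcc : ∀ s ∈ Set.Icc (0:ℝ) t, 0 < r s := fun s hs =>
      hrpos s (lt_of_le_of_lt hs.2 ht.2)
    have hcont : ContinuousOn (fun s => q s (Fin.last n) * r s ^ (-Z)) (Set.Icc 0 t) := by
      have hq' : ContinuousOn (fun s => q s (Fin.last n)) (Set.Icc 0 t) :=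
        (continuous_apply (Fin.last n)).comp_continuousOn
          (hqc.mono (Set.Icc_subset_Icc le_rfl ht.2.le))
      have hr' : ContinuousOn r (Set.Icc 0 t) := fun s _ =>
        ((hrderiv s).continuousAt).continuousWithinAt
      exact hq'.mul (hr'.rpow_const fun s hs => Or.inl (hrposIcc s hs).ne')
    have hder : ∀ s ∈ Set.Ico (0:ℝ) t, HasDerivWithinAt
        (fun s => q s (Fin.last n) * r s ^ (-Z)) 0 (Set.Ici s) s := by
      intro s hs
      have hsT : s ∈ Set.Ico (0:ℝ) T := ⟨hs.1, hs.2.trans ht.2⟩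
      have hrs : 0 < r s := hrpos s hsT.2
      have hEs : Real.exp (-(T - s)) < 1 := Real.exp_lt_one_iff.mpr (by
        have := hsT.2; linarith)
      have h1 := hcomp s hsT (Fin.last n)
      rw [if_pos rfl] at h1
      have h2 : HasDerivAt (fun y => r y ^ (-Z))
          ((-Real.exp (-(T - s)) / (1 - Real.exp (-T))) * (-Z) * r s ^ (-Z - 1)) s :=
        (hrderiv s).rpow_const (Or.inl hrs.ne')
      have h3 := h1.mul h2
      have hzero : (Z * (Real.exp (-(T - s)) / (1 - Real.exp (-(T - s))))) *
            (-1 * q s (Fin.last n)) * r s ^ (-Z) +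
          q s (Fin.last n) *
            ((-Real.exp (-(T - s)) / (1 - Real.exp (-T))) * (-Z) * r s ^ (-Z - 1)) = 0 := by
        have hre : (1 - Real.exp (-(T - s))) = (1 - Real.exp (-T)) * r s := by
          rw [hrval]; field_simp
        have hrZ : r s ^ (-Z) = r s ^ (-Z - 1) * r s := by
          rw [← Real.rpow_add_one hrs.ne' (-Z - 1)]; ring_nf
        rw [hrZ, hre]
        field_simp
        ring
      rw [hzero] at h3
      exact h3.hasDerivWithinAt
    have hFt := constant_of_has_deriv_right_zero hcont hder t (Set.right_mem_Icc.mpr ht.1)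
    have hF0 : q 0 (Fin.last n) * r 0 ^ (-Z) = 1 := by
      rw [hq0, hr0]; simp
    rw [hF0] at hFt
    have hrt : 0 < r t := hrpos t ht.2
    have h4 : r t ^ (-Z) * r t ^ Z = 1 := by
      rw [← Real.rpow_add hrt]; simp
    calc q t (Fin.last n) = q t (Fin.last n) * (r t ^ (-Z) * r t ^ Z) := by rw [h4, mul_one]
      _ = (q t (Fin.last n) * r t ^ (-Z)) * r t ^ Z := by ring
      _ = 1 * r t ^ Z := by rw [hFt]
      _ = r t ^ Z := one_mul _
  -- the masked coordinate at T
  have hrT : r T ^ Z = 0 := by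
    rw [hrval]; simp [Real.zero_rpow hZpos.ne']
  have huT : q T (Fin.last n) = 0 := by
    have hne : (nhdsWithin T (Set.Ico (0:ℝ) T)).NeBot := by
      rw [← mem_closure_iff_nhdsWithin_neBot, closure_Ico hT.ne]
      exact Set.right_mem_Icc.mpr hT.le
    have h1 : Filter.Tendsto (fun s => q s (Fin.last n)) (nhdsWithin T (Set.Ico (0:ℝ) T))
        (nhds (q T (Fin.last n))) := by
      have hc := ((continuous_apply (Fin.last n)).comp_continuousOn hqc) T
        (Set.right_mem_Icc.mpr hT.le)
      exact hc.mono_left (nhdsWithin_mono _ Set.Ico_subset_Icc_self)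
    have h2 : Filter.Tendsto (fun s => r s ^ Z) (nhdsWithin T (Set.Ico (0:ℝ) T)) (nhds 0) := by
      have hrc : ContinuousAt r T := (hrderiv T).continuousAt
      have hca : ContinuousAt (fun s => r s ^ Z) T :=
        (Real.continuousAt_rpow_const (r T) Z (Or.inr hZpos.le)).comp hrc
      have := hca.tendsto
      rw [hrT] at this
      exact this.mono_left nhdsWithin_le_nhds
    have heq : (fun s => q s (Fin.last n)) =ᶠ[nhdsWithin T (Set.Ico (0:ℝ) T)]
        fun s => r s ^ Z :=
      eventually_mem_nhdsWithin.mono fun s hs => hu s hs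
    exact tendsto_nhds_unique (h1.congr' heq) h2
  have huAll : ∀ t ∈ Set.Icc (0:ℝ) T, q t (Fin.last n) = r t ^ Z := by
    intro t ht
    rcases lt_or_eq_of_le ht.2 with h | h
    · exact hu t ⟨ht.1, h⟩
    · rw [h, huT, hrT]
  -- non-masked coordinates
  have hxAll : ∀ x, x ≠ Fin.last n → ∀ t ∈ Set.Icc (0:ℝ) T,
      q t x = (1 - r t ^ Z) * ptw x := by
    intro x hx t ht
    have hcont : ContinuousOn (fun s => q s x - (1 - r s ^ Z) * ptw x) (Set.Icc 0 T) := by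
      have hq' : ContinuousOn (fun s => q s x) (Set.Icc 0 T) :=
        (continuous_apply x).comp_continuousOn hqc
      have hr' : ContinuousOn r (Set.Icc 0 T) := fun s _ =>
        ((hrderiv s).continuousAt).continuousWithinAt
      exact hq'.sub (((continuousOn_const.sub
        (hr'.rpow_const fun s _ => Or.inr hZpos.le))).mul continuousOn_const)
    have hder : ∀ s ∈ Set.Ico (0:ℝ) T, HasDerivWithinAt
        (fun s => q s x - (1 - r s ^ Z) * ptw x) 0 (Set.Ici s) s := by
      intro s hs
      have hrs : 0 < r s := hrpos s hs.2
      have hEs : Real.exp (-(T - s)) < 1 := Real.exp_lt_one_iff.mpr (by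
        have := hs.2; linarith)
      have h1 := hcomp s hs x
      rw [if_neg hx] at h1
      rw [hu s hs] at h1
      have h2 : HasDerivAt (fun y => r y ^ Z)
          ((-Real.exp (-(T - s)) / (1 - Real.exp (-T))) * Z * r s ^ (Z - 1)) s :=
        (hrderiv s).rpow_const (Or.inl hrs.ne')
      have h3 : HasDerivAt (fun y => (1 - r y ^ Z) * ptw x)
          ((-((-Real.exp (-(T - s)) / (1 - Real.exp (-T))) * Z * r s ^ (Z - 1))) * ptw x) s :=
        (h2.const_sub 1).mul_const _
      have h4 := h1.sub h3
      have hzero : (Z * (Real.exp (-(T - s)) / (1 - Real.exp (-(T - s))))) *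
            (ptw x * r s ^ Z) -
          (-((-Real.exp (-(T - s)) / (1 - Real.exp (-T))) * Z * r s ^ (Z - 1))) * ptw x = 0 := by
        have hre : (1 - Real.exp (-(T - s))) = (1 - Real.exp (-T)) * r s := by
          rw [hrval]; field_simp
        have hrZ : r s ^ Z = r s ^ (Z - 1) * r s := by
          rw [← Real.rpow_add_one hrs.ne' (Z - 1)]; ring_nf
        rw [hrZ, hre]
        field_simp
        ring
      rw [hzero] at h4
      exact h4.hasDerivWithinAt
    have hGt := constant_of_has_deriv_right_zero hcont hder t ht
    have hG0 : q 0 x - (1 - r 0 ^ Z) * ptw x = 0 := by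
      rw [hq0, hr0]; simp [hx]
    rw [hG0] at hGt
    linarith [hGt]
  -- conclusion
  intro t ht x
  by_cases hx : x = Fin.last n
  · subst hx
    rw [if_pos rfl, ← hrval t]
    exact huAll t ht
  · rw [if_neg hx, ← hrval t]
    exact hxAll x hx t ht
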